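/- For 2 ≤ i ≤ n, A(n,i) ≤ n − i + 1. -/

import Mathlib

open Finset

/-- ℓ1 (Hamming) weight of a `q`-ary vector of length `n`. -/
def hw {n q : ℕ} (x : Fin n → Fin q) : ℕ := ∑ k, (x k : ℕ)

/-- `E_q(n,i)`: the set of `q`-ary vectors of length `n` and weight `i`. -/
def lev (q n i : ℕ) : Finset (Fin n → Fin q) := Finset.univ.filter (fun x => hw x = i)

/-- Coordinatewise domination `x ≤ y`. -/
def domLe {n q : ℕ} (x y : Fin n → Fin q) : Prop := ∀ k, (x k : ℕ) ≤ (y k : ℕ)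

instance {n q : ℕ} (x y : Fin n → Fin q) : Decidable (domLe x y) :=
  inferInstanceAs (Decidable (∀ k, (x k : ℕ) ≤ (y k : ℕ)))

/-- `Y` covers `E_q(n,i-1)`: every vector of weight `i-1` is dominated by some `y ∈ Y`. -/
def Covers (q n i : ℕ) (Y : Finset (Fin n → Fin q)) : Prop :=
  ∀ x ∈ lev q n (i - 1), ∃ y ∈ Y, domLe x y

/-- A codeword class at level `i`: a subset of `E_q(n,i)` covering `E_q(n,i-1)`. -/
def IsClass (q n i : ℕ) (Y : Finset (Fin n → Fin q)) : Prop :=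
  Y ⊆ lev q n i ∧ Covers q n i Y

/-- `A_q(n,i)`: the maximum number of pairwise disjoint codeword classes in `E_q(n,i)`. -/
noncomputable def A (q n i : ℕ) : ℕ :=
  sSup {m | ∃ 𝒴 : Finset (Finset (Fin n → Fin q)),
    (∀ Y ∈ 𝒴, IsClass q n i Y) ∧
    (𝒴 : Set (Finset (Fin n → Fin q))).Pairwise Disjoint ∧ 𝒴.card = m}

/-- For 2 ≤ i ≤ n, A(n,i) ≤ n - i + 1. -/
lemma card_filter_lt_fin (n m : ℕ) (h : m ≤ n) :
    (Finset.univ.filter (fun k : Fin n => (k:ℕ) < m)).card = m := by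
  have : (Finset.univ.filter (fun k : Fin n => (k:ℕ) < m))
      = Finset.univ.image (Fin.castLE h) := by
    ext k
    simp only [mem_filter, mem_univ, true_and, mem_image]
    constructor
    · intro hk; exact ⟨⟨k.val, hk⟩, rfl⟩
    · rintro ⟨j, rfl⟩; exact j.isLt
  rw [this, Finset.card_image_of_injective _ (Fin.castLE_injective h)]
  simp

theorem stmt_6 (n i : ℕ) (hi : 2 ≤ i) (hin : i ≤ n) : A 2 n i ≤ n - i + 1 := by
  have hn : 0 < n := by omega
  -- the fixed weight-(i-1) vector
  set x₀ : Fin n → Fin 2 := fun k => if (k:ℕ) < i - 1 then 1 else 0 with hx₀def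
  have hx₀val : ∀ k, (x₀ k : ℕ) = if (k:ℕ) < i - 1 then 1 else 0 := by
    intro k; by_cases h : (k:ℕ) < i - 1 <;> simp [hx₀def, h]
  have hwx₀ : hw x₀ = i - 1 := by
    unfold hw
    simp_rw [hx₀val]
    rw [← Finset.card_filter]
    exact card_filter_lt_fin n (i-1) (by omega)
  have hx₀lev : x₀ ∈ lev 2 n (i - 1) := by
    simp [lev, hwx₀]
  -- the candidate set S
  set S : Finset (Fin n → Fin 2) :=
    (lev 2 n i).filter (fun y => domLe x₀ y) with hSdef
  -- uniqueness of the strict coordinate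
  have huniq : ∀ y ∈ S, ∀ k1 k2, (x₀ k1 : ℕ) < (y k1 : ℕ) → (x₀ k2 : ℕ) < (y k2 : ℕ) →
      k1 = k2 := by
    intro y hy k1 k2 h1 h2
    by_contra hne
    have hyS := Finset.mem_filter.mp hy
    have hylev : hw y = i := (Finset.mem_filter.mp hyS.1).2
    have hdom : domLe x₀ y := hyS.2
    have hle : ∀ k, (x₀ k : ℕ) + (if k = k1 ∨ k = k2 then 1 else 0) ≤ (y k : ℕ) := by
      intro k
      rcases eq_or_ne k k1 with rfl | hk1
      · simpa using h1
      rcases eq_or_ne k k2 with rfl | hk2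
      · simpa using h2
      · simpa [hk1, hk2] using hdom k
    have hsum : ∑ k, ((x₀ k : ℕ) + (if k = k1 ∨ k = k2 then 1 else 0)) ≤ ∑ k, (y k : ℕ) :=
      Finset.sum_le_sum (fun k _ => hle k)
    rw [Finset.sum_add_distrib] at hsum
    have hind : ∑ k : Fin n, (if k = k1 ∨ k = k2 then 1 else 0) = 2 := by
      rw [← Finset.card_filter]
      have : Finset.univ.filter (fun k : Fin n => k = k1 ∨ k = k2) = {k1, k2} := by
        ext k; simp
      rw [this, Finset.card_insert_of_notMem (by simp [hne]), Finset.card_singleton]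
    have hsx : ∑ k, (x₀ k : ℕ) = i - 1 := hwx₀
    have hsy : ∑ k, (y k : ℕ) = i := hylev
    omega
  -- D y is nonempty for y ∈ S
  have hne : ∀ y ∈ S, (Finset.univ.filter (fun k => (x₀ k : ℕ) < (y k : ℕ))).Nonempty := by
    intro y hy
    have hyS := Finset.mem_filter.mp hy
    have hylev : hw y = i := (Finset.mem_filter.mp hyS.1).2
    rw [Finset.filter_nonempty_iff]
    by_contra h
    push_neg at h
    have hle : ∑ k, (y k : ℕ) ≤ ∑ k, (x₀ k : ℕ) :=
      Finset.sum_le_sum (fun k _ => h k (Finset.mem_univ k))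
    have hsx : ∑ k, (x₀ k : ℕ) = i - 1 := hwx₀
    have hsy : ∑ k, (y k : ℕ) = i := hylev
    omega
  -- the extraction map
  set f : (Fin n → Fin 2) → Fin n := fun y =>
    if h : (Finset.univ.filter (fun k => (x₀ k : ℕ) < (y k : ℕ))).Nonempty
    then (Finset.univ.filter (fun k => (x₀ k : ℕ) < (y k : ℕ))).min' h
    else ⟨0, hn⟩ with hfdef
  have hfmem : ∀ y ∈ S, (x₀ (f y) : ℕ) < (y (f y) : ℕ) := by
    intro y hy
    have h := hne y hy
    have := Finset.min'_mem _ h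
    simp only [hfdef, dif_pos h]
    exact (Finset.mem_filter.mp this).2
  set T : Finset (Fin n) := Finset.univ.filter (fun k : Fin n => ¬ (k:ℕ) < i - 1) with hTdef
  have hTcard : T.card = n - i + 1 := by
    rw [hTdef, Finset.filter_not, Finset.card_sdiff_of_subset (Finset.filter_subset _ _),
      card_filter_lt_fin n (i-1) (by omega), Finset.card_univ, Fintype.card_fin]
    omega
  have hST : S.card ≤ T.card := by
    apply Finset.card_le_card_of_injOn f
    · intro y hy
      have h := hfmem y hy
      simp only [hTdef, Finset.mem_coe, Finset.mem_filter, Finset.mem_univ, true_and]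
      intro hlt
      rw [hx₀val] at h
      simp only [hlt, if_pos] at h
      have := (y (f y)).isLt
      omega
    · intro y1 hy1' y2 hy2' heq
      have hy1 : y1 ∈ S := Finset.mem_coe.mp hy1'
      have hy2 : y2 ∈ S := Finset.mem_coe.mp hy2'
      have h1 : (x₀ (f y1) : ℕ) < (y1 (f y1) : ℕ) := hfmem y1 hy1
      have h2 : (x₀ (f y1) : ℕ) < (y2 (f y1) : ℕ) := by
        rw [heq]; exact hfmem y2 hy2
      have hval : ∀ y ∈ S, (x₀ (f y1) : ℕ) < (y (f y1) : ℕ) →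
          ∀ k, (y k : ℕ) = if k = f y1 then 1 else (x₀ k : ℕ) := by
        intro y hy hstrict k
        rcases eq_or_ne k (f y1) with hk | hk
        · rw [if_pos hk]
          rw [← hk] at hstrict
          have := (y k).isLt
          omega
        · simp only [if_neg hk]
          have hdom : domLe x₀ y := (Finset.mem_filter.mp hy).2
          have hnot : ¬ (x₀ k : ℕ) < (y k : ℕ) := fun hc => hk (huniq y hy k (f y1) hc hstrict)
          have := hdom k
          omega
      funext k
      have e1 := hval y1 hy1 h1 k
      have e2 := hval y2 hy2 h2 k
      exact Fin.val_injective (by omega)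
  -- now bound the sSup
  apply csSup_le'
  rintro b ⟨𝒴, hclass, hdisj, hcard⟩
  -- choice map from classes to S
  classical
  set g : Finset (Fin n → Fin 2) → (Fin n → Fin 2) := fun Y =>
    if h : ∃ y ∈ Y, domLe x₀ y then h.choose else (fun _ => 0) with hgdef
  have hg : ∀ Y ∈ 𝒴, g Y ∈ Y ∧ g Y ∈ S := by
    intro Y hY
    have hcl := hclass Y hY
    have hex : ∃ y ∈ Y, domLe x₀ y := hcl.2 x₀ hx₀lev
    have hspec := hex.choose_spec
    simp only [hgdef, dif_pos hex]
    refine ⟨hspec.1, ?_⟩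
    exact Finset.mem_filter.mpr ⟨hcl.1 hspec.1, hspec.2⟩
  have hbS : b ≤ S.card := by
    rw [← hcard]
    apply Finset.card_le_card_of_injOn g
    · intro Y hY; exact (hg Y hY).2
    · intro Y1 hY1 Y2 hY2 heq
      by_contra hne'
      have hd := hdisj hY1 hY2 hne'
      have m1 := (hg Y1 hY1).1
      have m2 := (hg Y2 hY2).1
      rw [heq] at m1
      exact (Finset.disjoint_left.mp hd m1) m2
  omega
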